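/- arXiv:1403.4813 — 6 statements merged into one kernel-verified Lean document; each statement's English description precedes it below -/
import Mathlib

section
/- Let s₀ →α₀ s₁ →α₁ ... →α_{k-1} s_k →α_k s_{k+1} be an execution fragment in an action-deterministic transition system, and suppose β = α_k is enabled in s₀ and β is pairwise independent of each of α₀, ..., α_{k-1}. Then there exists an execution fragment of the same length k+1 from s₀ to s_{k+1} that executes β first, namely s₀ →β β(s₀) →α₀ β(s₁) →α₁ ... →α_{k-1} β(s_k) = s_{k+1}. -/
/-- An action-deterministic transition system: each action has at most one
successor from each state, given by a partial step function. -/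
structure TS (S A : Type) where
  step : A → S → Option S

namespace TS

variable {S A : Type}

/-- An action is enabled in a state if it has a successor. -/
def Enabled (T : TS S A) (a : A) (s : S) : Prop := (T.step a s).isSome

/-- `I` is an independence relation: for every state where two distinct
`I`-related actions are both enabled, each remains enabled after the other
(enabledness) and the two execution orders yield the same state (commutativity). -/
def IndepRel (T : TS S A) (I : A → A → Prop) : Prop :=
  ∀ a b s, I a b → a ≠ b → T.Enabled a s → T.Enabled b s →
    ∃ sa sb, T.step a s = some sa ∧ T.step b s = some sb ∧
      T.Enabled b sa ∧ T.Enabled a sb ∧ T.step b sa = T.step a sb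

/-- A deadlock state: no action is enabled. -/
def Deadlock (T : TS S A) (s : S) : Prop := ∀ a : A, ¬ T.Enabled a s

/-- `Run T l s t`: an execution fragment from `s` to `t` whose sequence of
action labels is `l` (so its length is `l.length`). -/
inductive Run (T : TS S A) : List A → S → S → Prop
  | nil (s : S) : Run T [] s s
  | cons {a : A} {l : List A} {s s' t : S} :
      T.step a s = some s' → Run T l s' t → Run T (a :: l) s t

/-- `ARun T amp l s t`: an execution fragment in the reduced graph that keeps,
from each state `u`, only the transitions labeled by actions in `amp u`. -/
inductive ARun (T : TS S A) (amp : S → Set A) : List A → S → S → Prop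
  | nil (s : S) : ARun T amp [] s s
  | cons {a : A} {l : List A} {s s' t : S} :
      a ∈ amp s → T.step a s = some s' → ARun T amp l s' t → ARun T amp (a :: l) s t

end TS

/-- if `s₀ →α₀ s₁ → ... →α_{k-1} s_k →β s_{k+1}` is an execution
fragment, `β` is enabled in `s₀`, and `β` is independent of each of the
(distinct from `β`) actions `α₀, ..., α_{k-1}`, then there is an execution
fragment of the same length from `s₀` to `s_{k+1}` executing `β` first,
namely the one labeled `β :: [α₀, ..., α_{k-1}]`. -/
theorem stmt1 {S A : Type} (T : TS S A) (I : A → A → Prop) (hI : T.IndepRel I)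
    (l : List A) (b : A) (s t : S)
    (hrun : T.Run (l ++ [b]) s t)
    (hb : T.Enabled b s)
    (hne : ∀ a ∈ l, a ≠ b)
    (hind : ∀ a ∈ l, I a b) :
    T.Run (b :: l) s t := by
  induction l generalizing s with
  | nil =>
    cases hrun with
    | cons h hr => cases hr; exact TS.Run.cons h (TS.Run.nil _)
  | cons a l ih =>
    cases hrun with
    | cons h hr =>
      obtain ⟨sa, sb, ha, hbs, hba, hab, hcomm⟩ :=
        hI a b s (hind a (by simp)) (hne a (by simp)) (by simp [TS.Enabled, h]) hb
      rw [h] at ha; cases ha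
      have ihr := ih _ hr hba (fun x hx => hne x (by simp [hx]))
        (fun x hx => hind x (by simp [hx]))
      cases ihr with
      | cons h2 hr2 =>
        exact TS.Run.cons hbs (TS.Run.cons (hcomm ▸ h2) hr2)
end

section
/- Let s₀ be a state, A ⊆ enabled(s₀) a nonempty 'ample' set, and let π = s₀ →α₀ s₁ → ... →α_{n-1} s_n be an execution fragment ending in a deadlock state s_n (i.e., enabled(s_n) = ∅). Assume condition C1: along every execution fragment starting at s₀, no action dependent on an action of A occurs before some action of A occurs. Then some α_k with 0 ≤ k < n belongs to A. -/
theorem TS.Run.snoc {S A : Type} {T : TS S A} {l : List A} {s t t' : S} {a : A}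
    (h : T.Run l s t) (hs : T.step a t = some t') : T.Run (l ++ [a]) s t' := by
  induction h with
  | nil s => exact TS.Run.cons hs (TS.Run.nil _)
  | cons h1 h2 ih => exact TS.Run.cons h1 (ih hs)

/-- let `Amp ⊆ enabled(s₀)` be a nonempty ample set and
`π = s₀ →α₀ ... →α_{n-1} s_n` an execution fragment ending in a deadlock state.
Assume condition C1: along every execution fragment starting at `s₀`, an action
dependent on a member of `Amp` (dependency being the complement of the
independence relation `I`) cannot occur before some member of `Amp` occurs.
Then some action `α_k` of `π` belongs to `Amp`. -/
theorem stmt3 {S A : Type} (T : TS S A) (I : A → A → Prop) (hI : T.IndepRel I)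
    (Amp : Set A) (s0 : S)
    (hsub : ∀ a ∈ Amp, T.Enabled a s0)
    (hne : Amp.Nonempty)
    (hC1 : ∀ (m : List A) (g : A) (u : S), T.Run (m ++ [g]) s0 u →
      (∃ b ∈ Amp, ¬ I g b) → ∃ a ∈ m, a ∈ Amp)
    (l : List A) (sn : S)
    (hrun : T.Run l s0 sn)
    (hdead : T.Deadlock sn) :
    ∃ a ∈ l, a ∈ Amp := by
  by_contra hno
  push_neg at hno
  obtain ⟨β, hβ⟩ := hne
  -- β stays enabled along the run
  suffices h : T.Enabled β sn from hdead β h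
  have key : ∀ (l : List A) (s t : S), T.Run l s t →
      ∀ p : List A, T.Run p s0 s → (∀ g ∈ p, g ∉ Amp) → (∀ g ∈ l, g ∉ Amp) →
      T.Enabled β s → T.Enabled β t := by
    intro l s t hr
    induction hr with
    | nil s => intro _ _ _ _ h; exact h
    | cons hstep hrest ih =>
      rename_i a l' s s' t'
      intro p hp hpn hln henb
      have haA : a ∉ Amp := hln a List.mem_cons_self
      have hrun' : T.Run (p ++ [a]) s0 s' := hp.snoc hstep
      have hIab : I a β := by
        by_contra hIc
        obtain ⟨x, hx, hxA⟩ := hC1 p a s' hrun' ⟨β, hβ, hIc⟩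
        exact hpn x hx hxA
      have hne' : a ≠ β := fun h => haA (h ▸ hβ)
      have hena : T.Enabled a s := by simp [TS.Enabled, hstep]
      obtain ⟨sa, sb, h1, h2, h3, h4, h5⟩ := hI a β s hIab hne' hena henb
      rw [hstep] at h1
      have : sa = s' := (Option.some.inj h1).symm
      subst this
      exact ih (p ++ [a]) hrun'
        (by intro g hg
            rcases List.mem_append.mp hg with h | h
            · exact hpn g h
            · simp at h; subst h; exact haA)
        (fun g hg => hln g (List.mem_cons_of_mem _ hg)) h3
  exact key l s0 sn hrun [] (TS.Run.nil s0) (by simp) (fun g hg => hno g hg) (hsub β hβ)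
end

section
/- Let π = s₀ →α₀ s₁ → ... →α_{n-1} s_n be an execution fragment in an action-deterministic transition system with s_n a deadlock state. Let A ⊆ enabled(s₀) satisfy condition C1, suppose α_k is the first action of π lying in A, and suppose each of α₀,...,α_{k-1} is independent of α_k. Then there is an execution fragment of the same length n from s₀ to s_n whose first action is α_k. -/
theorem swap_run {S A : Type} (T : TS S A) (I : A → A → Prop) (hI : T.IndepRel I)
    (ak : A) (l2 : List A) :
    ∀ (l1 : List A) (s sn : S), T.Run (l1 ++ ak :: l2) s sn →
      T.Enabled ak s → (∀ a ∈ l1, I a ak ∧ a ≠ ak) →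
      T.Run (ak :: (l1 ++ l2)) s sn := by
  intro l1
  induction l1 with
  | nil => intro s sn h _ _; simpa using h
  | cons a l1' ih =>
    intro s sn h hen hall
    cases h with
    | cons hstep hrest =>
      rename_i s'
      have ha : T.Enabled a s := by simp [TS.Enabled, hstep]
      obtain ⟨haI, hane⟩ := hall a (by simp)
      obtain ⟨sa, sb, h1, h2, h3, h4, h5⟩ := hI a ak s haI hane ha hen
      rw [hstep] at h1; injection h1 with h1; subst h1
      have hr' := ih s' sn hrest h3 (fun x hx => hall x (by simp [hx]))
      cases hr' with
      | cons hstep2 hrest2 =>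
        rename_i s''
        rw [hstep2] at h5
        exact TS.Run.cons h2 (TS.Run.cons h5.symm hrest2)

/-- let `π = s₀ →α₀ ... →α_{n-1} s_n` end in a deadlock state,
let `Amp ⊆ enabled(s₀)` satisfy C1, suppose `α_k` (decomposing the label list
as `l₁ ++ α_k :: l₂` with no member of `Amp` in `l₁`) is the first action of
`π` lying in `Amp`, and suppose each of `α₀, ..., α_{k-1}` is independent of
`α_k`. Then there is an execution fragment of the same length `n` from `s₀`
to `s_n` whose first action is `α_k`. -/
theorem stmt4 {S A : Type} (T : TS S A) (I : A → A → Prop) (hI : T.IndepRel I)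
    (Amp : Set A) (s0 sn : S)
    (hsub : ∀ a ∈ Amp, T.Enabled a s0)
    (hC1 : ∀ (m : List A) (g : A) (u : S), T.Run (m ++ [g]) s0 u →
      (∃ b ∈ Amp, ¬ I g b) → ∃ a ∈ m, a ∈ Amp)
    (l l1 l2 : List A) (ak : A)
    (hdecomp : l = l1 ++ ak :: l2)
    (hak : ak ∈ Amp)
    (hfirst : ∀ a ∈ l1, a ∉ Amp)
    (hind : ∀ a ∈ l1, I a ak)
    (hrun : T.Run l s0 sn)
    (hdead : T.Deadlock sn) :
    ∃ tl : List A, (ak :: tl).length = l.length ∧ T.Run (ak :: tl) s0 sn := by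
  subst hdecomp
  refine ⟨l1 ++ l2, by simp [Nat.add_assoc], ?_⟩
  exact swap_run T I hI ak l2 l1 s0 sn hrun (hsub ak hak)
    (fun a ha => ⟨hind a ha, fun h => hfirst a ha (h ▸ hak)⟩)
end

section
/- (Soundness and completeness of ample-set reduction for deadlock reachability.) Let G be the full state graph of a finite acyclic action-deterministic transition system, and for each state s with enabled(s) ≠ ∅ let ample(s) ⊆ enabled(s) be nonempty (C0) and satisfy C1, where whenever ample(s) is a strict subset of enabled(s), every action in ample(s) is independent of every other action enabled in s. Let G̃ be the subgraph keeping from each state s only the transitions labeled by actions in ample(s). Then for every execution in G from an initial state σ₀ to a deadlock state σ of length n, there exists an execution in G̃ from σ₀ to σ of length n, and conversely every such execution of G̃ is one of G. -/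
namespace Stmt5Aux
open TS
variable {S A : Type}

lemma run_split {T : TS S A} {l1 l2 : List A} {s t : S}
    (h : T.Run (l1 ++ l2) s t) : ∃ u, T.Run l1 s u ∧ T.Run l2 u t := by
  induction l1 generalizing s with
  | nil => exact ⟨s, .nil s, h⟩
  | cons a l ih =>
    cases h with
    | cons hs hr =>
      obtain ⟨u, h1, h2⟩ := ih hr
      exact ⟨u, .cons hs h1, h2⟩

lemma pres {T : TS S A} {I : A → A → Prop} (hI : T.IndepRel I) {a : A} :
    ∀ (l : List A) {s t : S}, T.Enabled a s → (∀ g ∈ l, I g a ∧ g ≠ a) →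
      T.Run l s t → T.Enabled a t := by
  intro l
  induction l with
  | nil => intro s t ha _ hr; cases hr; exact ha
  | cons g m ih =>
    intro s t ha hgs hr
    cases hr with
    | cons hstep hr =>
      obtain ⟨hIga, hne⟩ := hgs g (by simp)
      have hEg : T.Enabled g s := by simp [TS.Enabled, hstep]
      obtain ⟨sg, sb, hsg, hsb, hEa', hEg', hcomm⟩ := hI g a s hIga hne hEg ha
      rw [hstep] at hsg
      cases hsg
      exact ih hEa' (fun x hx => hgs x (by simp [hx])) hr

lemma comm {T : TS S A} {I : A → A → Prop} (hI : T.IndepRel I) {a : A} :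
    ∀ (m : List A) {rest : List A} {s t : S},
      T.Enabled a s → (∀ g ∈ m, I g a ∧ g ≠ a) →
      T.Run (m ++ a :: rest) s t →
      ∃ s', T.step a s = some s' ∧ T.Run (m ++ rest) s' t := by
  intro m
  induction m with
  | nil =>
    intro rest s t _ _ hr
    cases hr with
    | cons hstep hr => exact ⟨_, hstep, hr⟩
  | cons g m' ih =>
    intro rest s t ha hgs hr
    cases hr with
    | cons hstep hr =>
      obtain ⟨hIga, hne⟩ := hgs g (by simp)
      have hEg : T.Enabled g s := by simp [TS.Enabled, hstep]
      obtain ⟨sg, sb, hsg, hsb, hEa', hEg', hcomm⟩ := hI g a s hIga hne hEg ha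
      rw [hstep] at hsg
      cases hsg
      obtain ⟨s'', hstep'', hr''⟩ := ih hEa' (fun x hx => hgs x (by simp [hx])) hr
      rw [hstep''] at hcomm
      exact ⟨sb, hsb, .cons hcomm.symm hr''⟩

lemma split_first (P : A → Prop) :
    ∀ l : List A, (∀ g ∈ l, ¬ P g) ∨
      ∃ m g rest, l = m ++ g :: rest ∧ P g ∧ ∀ x ∈ m, ¬ P x := by
  intro l
  induction l with
  | nil => exact Or.inl (by simp)
  | cons a l ih =>
    by_cases hp : P a
    · exact Or.inr ⟨[], a, l, by simp, hp, by simp⟩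
    · rcases ih with h | ⟨m, g, rest, rfl, hg, hm⟩
      · left; intro x hx
        rcases List.mem_cons.mp hx with rfl | hx
        · exact hp
        · exact h x hx
      · right
        refine ⟨a :: m, g, rest, by simp, hg, ?_⟩
        intro x hx
        rcases List.mem_cons.mp hx with rfl | hx
        · exact hp
        · exact hm x hx

/-- From C1: if `x` occurs in the run after a prefix with no ample actions,
then `x` is independent of every ample action at the start state. -/
lemma indep_of_no_amp {T : TS S A} {I : A → A → Prop} {amp : S → Set A}
    (hC1 : ∀ (s : S) (m : List A) (g : A) (u : S), T.Run (m ++ [g]) s u →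
      (∃ b ∈ amp s, ¬ I g b) → ∃ a ∈ m, a ∈ amp s)
    {σ0 u : S} {m1 : List A} {x : A}
    (hrun : T.Run (m1 ++ [x]) σ0 u) (hm : ∀ y ∈ m1, y ∉ amp σ0) :
    ∀ b ∈ amp σ0, I x b := by
  intro b hb
  by_contra hnI
  obtain ⟨a, ha, ha'⟩ := hC1 σ0 m1 x u hrun ⟨b, hb, hnI⟩
  exact hm a ha ha'

lemma fwd {T : TS S A} {I : A → A → Prop} (hI : T.IndepRel I)
    {amp : S → Set A}
    (hsub : ∀ (s : S), ∀ a ∈ amp s, T.Enabled a s)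
    (hC0 : ∀ s : S, (amp s).Nonempty ↔ ∃ a, T.Enabled a s)
    (hC1 : ∀ (s : S) (m : List A) (g : A) (u : S), T.Run (m ++ [g]) s u →
      (∃ b ∈ amp s, ¬ I g b) → ∃ a ∈ m, a ∈ amp s)
    {σ : S} (hdead : T.Deadlock σ) :
    ∀ (n : ℕ) (l : List A) (σ0 : S), l.length ≤ n → T.Run l σ0 σ →
      ∃ l' : List A, l'.length = l.length ∧ T.ARun amp l' σ0 σ := by
  intro n
  induction n with
  | zero =>
    intro l σ0 hlen hrun
    have : l = [] := List.eq_nil_of_length_eq_zero (Nat.le_zero.mp hlen)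
    subst this
    cases hrun
    exact ⟨[], rfl, .nil σ⟩
  | succ n ih =>
    intro l σ0 hlen hrun
    rcases l with _ | ⟨a, ltail⟩
    · cases hrun
      exact ⟨[], rfl, .nil σ⟩
    ·
      have hEa : T.Enabled a σ0 := by
        cases hrun with
        | cons hstep _ => simp [TS.Enabled, hstep]
      -- independence facts for members of a prefix with no ample actions
      have indep : ∀ (m tail : List A), (a :: ltail) = m ++ tail →
          (∀ y ∈ m, y ∉ amp σ0) → ∀ x ∈ m, ∀ b ∈ amp σ0, I x b ∧ x ≠ b := by
        intro m tail heq hm x hx b hb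
        obtain ⟨m1, m2, rfl⟩ := List.append_of_mem hx
        have hrun' : T.Run ((m1 ++ [x]) ++ (m2 ++ tail)) σ0 σ := by
          have : (m1 ++ x :: m2) ++ tail = (m1 ++ [x]) ++ (m2 ++ tail) := by
            simp
          rw [heq, this] at hrun
          exact hrun
        obtain ⟨u, h1, _⟩ := run_split hrun'
        refine ⟨indep_of_no_amp hC1 h1
          (fun y hy => hm y (by simp [hy])) b hb, ?_⟩
        rintro rfl
        exact hm x hx hb
      rcases split_first (· ∈ amp σ0) (a :: ltail) with hall | ⟨m, g, rest, heq, hg, hm⟩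
      · -- no ample action ever taken: the chosen ample action stays enabled, contradicting deadlock
        obtain ⟨a0, ha0⟩ := (hC0 σ0).mpr ⟨a, hEa⟩
        exfalso
        refine hdead a0 (pres hI (a :: ltail) (hsub σ0 a0 ha0) ?_ hrun)
        intro x hx
        exact indep (a :: ltail) [] (by simp) hall x hx a0 ha0
      · -- first ample action g: commute it to the front
        have hind : ∀ x ∈ m, I x g ∧ x ≠ g := by
          intro x hx
          exact indep m (g :: rest) heq hm x hx g hg
        rw [heq] at hrun
        obtain ⟨s', hstep, hrun'⟩ := comm hI m (hsub σ0 g hg) hind hrun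
        have hlen' : (m ++ rest).length ≤ n := by
          have := congrArg List.length heq
          simp at this hlen ⊢
          omega
        obtain ⟨l'', hlen'', har⟩ := ih (m ++ rest) s' hlen' hrun'
        refine ⟨g :: l'', ?_, .cons hg hstep har⟩
        have := congrArg List.length heq
        simp at this hlen'' ⊢
        omega

lemma bwd {T : TS S A} {amp : S → Set A} {l : List A} {s t : S}
    (h : T.ARun amp l s t) : T.Run l s t := by
  induction h with
  | nil s => exact .nil s
  | cons _ hstep _ ih => exact .cons hstep ih

end Stmt5Aux

/-- soundness and completeness of ample-set reduction for deadlock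
reachability: in a finite acyclic action-deterministic transition system, let
`amp s ⊆ enabled(s)` be nonempty exactly when `enabled(s)` is nonempty (C0) and
satisfy C1 at every state, and suppose that whenever `amp s` is a strict subset
of `enabled(s)`, every action of `amp s` is independent of every other action
enabled at `s`. Then for every execution in the full graph from `σ₀` to a
deadlock state `σ` of length `n` there is an execution of length `n` from `σ₀`
to `σ` in the reduced graph (keeping from each state only the transitions
labeled by ample actions), and conversely every such reduced execution is an
execution of the full graph. -/
theorem stmt5 {S A : Type} [Fintype S] (T : TS S A) (I : A → A → Prop)
    (hI : T.IndepRel I)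
    (amp : S → Set A)
    (hacyc : ∀ (s : S) (l : List A), l ≠ [] → T.Run l s s → False)
    (hsub : ∀ (s : S), ∀ a ∈ amp s, T.Enabled a s)
    (hC0 : ∀ s : S, (amp s).Nonempty ↔ ∃ a, T.Enabled a s)
    (hC1 : ∀ (s : S) (m : List A) (g : A) (u : S), T.Run (m ++ [g]) s u →
      (∃ b ∈ amp s, ¬ I g b) → ∃ a ∈ m, a ∈ amp s)
    (hind : ∀ s : S, (∃ b, T.Enabled b s ∧ b ∉ amp s) →
      ∀ a ∈ amp s, ∀ b, T.Enabled b s → b ≠ a → I a b)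
    (σ0 σ : S) (hdead : T.Deadlock σ) (l : List A) :
    (T.Run l σ0 σ → ∃ l' : List A, l'.length = l.length ∧ T.ARun amp l' σ0 σ) ∧
    (T.ARun amp l σ0 σ → T.Run l σ0 σ) := by
  constructor
  · intro hrun
    exact Stmt5Aux.fwd hI hsub hC0 hC1 hdead l.length l σ0 le_rfl hrun
  · exact Stmt5Aux.bwd
end

section
/- If an execution fragment π from s₀ to a deadlock state s_n has length n, and we repeatedly transform π by, at step i, either moving forward (if the (i+1)-th action already lies in ample of the current state) or commuting the first occurrence of an ample action to position i+1 (using k applications of commutativity when it occurs k steps later), then after n steps we obtain an execution π_n of the same length n, with the same first and last states as π, in which every transition s_j →α_j s_{j+1} satisfies α_j ∈ ample(s_j). -/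
namespace TS

variable {S A : Type}

lemma enabled_preserved {T : TS S A} {I : A → A → Prop} (hI : T.IndepRel I)
    {b : A} : ∀ {l : List A} {s t : S}, T.Run l s t → T.Enabled b s →
    (∀ a ∈ l, I a b ∧ a ≠ b) → T.Enabled b t := by
  intro l
  induction l with
  | nil => intro s t h hb _; cases h; exact hb
  | cons a l ih =>
    intro s t h hb hall
    cases h with
    | cons hstep hrun =>
      have ha : T.Enabled a s := by simp [Enabled, hstep]
      obtain ⟨hIab, hne⟩ := hall a List.mem_cons_self
      obtain ⟨sa, sb, h1, h2, h3, h4, h5⟩ := hI a b s hIab hne ha hb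
      rw [hstep] at h1; cases h1
      exact ih hrun h3 (fun x hx => hall x (List.mem_cons_of_mem _ hx))

lemma commute {T : TS S A} {I : A → A → Prop} (hI : T.IndepRel I)
    {b : A} : ∀ {m : List A} {rest : List A} {s t : S},
    T.Run (m ++ b :: rest) s t → T.Enabled b s →
    (∀ a ∈ m, I a b ∧ a ≠ b) →
    ∃ s', T.step b s = some s' ∧ T.Run (m ++ rest) s' t := by
  intro m
  induction m with
  | nil =>
    intro rest s t h _ _
    cases h with
    | cons hstep hrun => exact ⟨_, hstep, hrun⟩
  | cons a m ih =>
    intro rest s t h hb hall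
    cases h with
    | cons hstep hrun =>
      have ha : T.Enabled a s := by simp [Enabled, hstep]
      obtain ⟨hIab, hne⟩ := hall a List.mem_cons_self
      obtain ⟨sa, sb, h1, h2, h3, h4, h5⟩ := hI a b s hIab hne ha hb
      rw [hstep] at h1; cases h1
      obtain ⟨s1', hb1, hrun'⟩ :=
        ih hrun h3 (fun x hx => hall x (List.mem_cons_of_mem _ hx))
      rw [hb1] at h5
      exact ⟨sb, h2, Run.cons h5.symm hrun'⟩

lemma find_first {P : A → Prop} : ∀ {l : List A}, (∃ a ∈ l, P a) →
    ∃ m b rest, l = m ++ b :: rest ∧ P b ∧ ∀ a ∈ m, ¬ P a := by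
  intro l
  induction l with
  | nil => rintro ⟨a, ha, _⟩; cases ha
  | cons a l ih =>
    intro h
    by_cases hPa : P a
    · exact ⟨[], a, l, rfl, hPa, by simp⟩
    · obtain ⟨x, hx, hPx⟩ := h
      rcases List.mem_cons.mp hx with rfl | hx
      · exact absurd hPx hPa
      · obtain ⟨m, b, rest, heq, hPb, hm⟩ := ih ⟨x, hx, hPx⟩
        refine ⟨a :: m, b, rest, by simp [heq], hPb, ?_⟩
        intro y hy
        rcases List.mem_cons.mp hy with rfl | hy
        · exact hPa
        · exact hm y hy

lemma run_prefix {T : TS S A} : ∀ {m l : List A} {s t : S}, T.Run (m ++ l) s t →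
    ∃ u, T.Run m s u ∧ T.Run l u t := by
  intro m
  induction m with
  | nil => intro l s t h; exact ⟨s, Run.nil s, h⟩
  | cons a m ih =>
    intro l s t h
    cases h with
    | cons hstep hrun =>
      obtain ⟨u, h1, h2⟩ := ih hrun
      exact ⟨u, Run.cons hstep h1, h2⟩

end TS

/-- in the setting of the ample-set reduction proof (C0, C1, and
the condition that whenever `amp s ≠ enabled(s)` the members of `amp s` are
independent of all actions occurring in any execution fragment from `s` before
the first occurrence of an `amp s` member), the step-by-step transformation of
an execution fragment `π` from `s₀` to a deadlock state `s_n` of length `n`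
(moving forward when the next action is ample, otherwise commuting the first
ample action to the front) yields an execution of the same length `n`, with the
same first and last states, all of whose transitions use ample actions. -/
theorem stmt16 {S A : Type} (T : TS S A) (I : A → A → Prop) (hI : T.IndepRel I)
    (amp : S → Set A)
    (hsub : ∀ (s : S), ∀ a ∈ amp s, T.Enabled a s)
    (hC0 : ∀ s : S, (amp s).Nonempty ↔ ∃ a, T.Enabled a s)
    (hC1 : ∀ (s : S) (m : List A) (g : A) (u : S), T.Run (m ++ [g]) s u →
      (∃ b ∈ amp s, ¬ I g b) → ∃ a ∈ m, a ∈ amp s)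
    (hind : ∀ (s : S) (m : List A) (u : S), T.Run m s u →
      (∀ a ∈ m, a ∉ amp s) → ∀ b ∈ amp s, ∀ a ∈ m, I a b)
    (s0 sn : S) (l : List A)
    (hrun : T.Run l s0 sn)
    (hdead : T.Deadlock sn) :
    ∃ l' : List A, l'.length = l.length ∧ T.ARun amp l' s0 sn := by
  obtain ⟨n, hn⟩ : ∃ n, l.length = n := ⟨l.length, rfl⟩
  induction n generalizing l s0 with
  | zero =>
    rw [List.length_eq_zero_iff] at hn; subst hn
    cases hrun
    exact ⟨[], rfl, TS.ARun.nil _⟩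
  | succ n ih =>
    -- l is nonempty
    obtain ⟨a0, l0, rfl⟩ : ∃ a0 l0, l = a0 :: l0 := by
      cases l with
      | nil => simp at hn
      | cons a0 l0 => exact ⟨a0, l0, rfl⟩
    -- amp s0 is nonempty
    have hen : ∃ a, T.Enabled a s0 := by
      cases hrun with
      | cons hstep _ => exact ⟨a0, by simp [TS.Enabled, hstep]⟩
    obtain ⟨b0, hb0⟩ := (hC0 s0).mpr hen
    -- some action in the list is in amp s0
    have hmem : ∃ a ∈ a0 :: l0, a ∈ amp s0 := by
      by_contra hno
      push_neg at hno
      have hindl : ∀ a ∈ a0 :: l0, I a b0 ∧ a ≠ b0 := by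
        intro a ha
        refine ⟨hind s0 (a0 :: l0) sn hrun hno b0 hb0 a ha, ?_⟩
        rintro rfl; exact hno a ha hb0
      have := TS.enabled_preserved hI hrun (hsub s0 b0 hb0) hindl
      exact hdead b0 this
    obtain ⟨m, b, rest, heq, hbamp, hm⟩ := TS.find_first (P := fun a => a ∈ amp s0) hmem
    -- prefix actions are independent of b and ≠ b
    have hmrun : ∀ a ∈ m, I a b ∧ a ≠ b := by
      intro a ha
      obtain ⟨u, hrunm, _⟩ := TS.run_prefix (heq ▸ hrun)
      refine ⟨hind s0 m u hrunm hm b hbamp a ha, ?_⟩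
      rintro rfl; exact hm a ha hbamp
    rw [heq] at hrun
    obtain ⟨s1, hstep, hrun'⟩ := TS.commute hI hrun (hsub s0 b hbamp) hmrun
    have hlen : (m ++ rest).length = n := by
      have : (a0 :: l0).length = (m ++ b :: rest).length := by rw [heq]
      simp at this hn ⊢
      omega
    obtain ⟨l', hl', harun⟩ := ih s1 (m ++ rest) hrun' hlen
    refine ⟨b :: l', ?_, TS.ARun.cons hbamp hstep harun⟩
    simp only [List.length_cons, hl', hlen, hn]
end

section
/- In a finite acyclic action-deterministic transition system where for every state all pairwise-distinct co-enabled actions are independent, every execution from a state s to a deadlock state d uses the same multiset of actions and has the same length; i.e., the multiset of action labels along any execution from s to d is an invariant of the pair (s, d). -/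
private lemma strip_lemma {S A : Type} (T : TS S A) (I : A → A → Prop)
    (hI : T.IndepRel I)
    (hallind : ∀ (a b : A) (s : S), a ≠ b → T.Enabled a s → T.Enabled b s → I a b)
    (d : S) (hdead : T.Deadlock d) :
    ∀ (l : List A) (s : S) (b : A) (sb : S), T.Run l s d → T.step b s = some sb →
      ∃ l', T.Run l' sb d ∧ (l : Multiset A) = b ::ₘ (l' : Multiset A) := by
  intro l
  induction l with
  | nil =>
    intro s b sb hr hb
    cases hr
    exact absurd (by simp [TS.Enabled, hb]) (hdead b)
  | cons a l ih =>
    intro s b sb hr hb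
    cases hr with
    | cons ha hrest =>
      rename_i sa
      by_cases hab : a = b
      · subst hab
        rw [ha] at hb
        cases hb
        exact ⟨l, hrest, rfl⟩
      · have hEa : T.Enabled a s := by simp [TS.Enabled, ha]
        have hEb : T.Enabled b s := by simp [TS.Enabled, hb]
        obtain ⟨sa', sb', ha', hb', hEbsa, hEasb, hcomm⟩ :=
          hI a b s (hallind a b s hab hEa hEb) hab hEa hEb
        rw [ha] at ha'; cases ha'
        rw [hb] at hb'; cases hb'
        obtain ⟨u, hu⟩ := Option.isSome_iff_exists.mp hEbsa
        obtain ⟨l', hl', hm⟩ := ih sa b u hrest hu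
        refine ⟨a :: l', TS.Run.cons (hcomm ▸ hu) hl', ?_⟩
        simp only [← Multiset.cons_coe, hm]
        exact Multiset.cons_swap a b _

/-- in a finite acyclic action-deterministic transition system in
which any two distinct co-enabled actions are independent, any two executions
from a state `s` to a deadlock state `d` use the same multiset of actions (and
hence have the same length). -/
theorem stmt17 {S A : Type} [Fintype S] (T : TS S A) (I : A → A → Prop)
    (hI : T.IndepRel I)
    (hallind : ∀ (a b : A) (s : S), a ≠ b → T.Enabled a s → T.Enabled b s → I a b)
    (hacyc : ∀ (s : S) (l : List A), l ≠ [] → T.Run l s s → False)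
    (s d : S) (hdead : T.Deadlock d)
    (l₁ l₂ : List A)
    (h1 : T.Run l₁ s d) (h2 : T.Run l₂ s d) :
    (l₁ : Multiset A) = (l₂ : Multiset A) ∧ l₁.length = l₂.length := by
  have main : (l₁ : Multiset A) = (l₂ : Multiset A) := by
    clear hacyc
    induction l₁ generalizing s l₂ with
    | nil =>
      cases h1
      cases h2 with
      | nil => rfl
      | @cons b _ _ _ _ hb _ =>
        exact absurd (show T.Enabled b d by simp [TS.Enabled, hb]) (hdead b)
    | cons a l ih =>
      cases h1 with
      | cons ha hrest =>
        obtain ⟨l₂', hl₂', hm⟩ := strip_lemma T I hI hallind d hdead l₂ s a _ h2 ha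
        rw [hm, ← Multiset.cons_coe]
        exact congrArg _ (ih _ _ hrest hl₂')
  exact ⟨main, by
    have := congrArg Multiset.card main
    simpa using this⟩
end
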